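/- For each $n$, let $F_n = \{(x_i(n), y_i(n)) : 1 \le i \le k_n\}$ be a set of $k_n$ distinct points in $\mathbb{R}^2$ with $k_n \to \infty$, and suppose $F_n$ converges in the Hausdorff metric to a bounded closed line segment $F \subset \mathbb{R}^2$ of positive length and finite slope $m$. Suppose further there exists $\delta > 0$ such that $p_{\delta}^n := \#\big(F_n \cap \big((\bar{x}_n - \delta, \bar{x}_n + \delta) \times (\bar{y}_n - \delta, \bar{y}_n + \delta)\big)\big) / k_n$ converges to some $p_{\delta} \in [0,1)$, where $\bar{x}_n = \tfrac{1}{k_n}\sum_i x_i(n)$ and $\bar{y}_n = \tfrac{1}{k_n}\sum_i y_i(n)$. Then the least squares slope $m_n = \sum_i (y_i(n) - \bar{y}_n)(x_i(n) - \bar{x}_n) / \sum_i (x_i(n) - \bar{x}_n)^2$ is well-defined for all sufficiently large $n$ and $m_n \to m$ as $n \to \infty$. -/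

import Mathlib

open Filter Set

set_option maxHeartbeats 2000000 in
private lemma lsSlope_aux (k : ℕ) (x y : ℕ → ℝ) (m a b ℓ δ pδ xb yb : ℝ)
    (hℓ : 0 < ℓ) (hδ : 0 < δ) (hpδ1 : pδ < 1) (hk1 : 1 ≤ k)
    (hxb : xb = (∑ i ∈ Finset.Icc 1 k, x i) / (k : ℝ))
    (hyb : yb = (∑ i ∈ Finset.Icc 1 k, y i) / (k : ℝ))
    (dn : ℝ)
    (hdn : dn = Metric.hausdorffDist
        {p : ℝ × ℝ | ∃ i : ℕ, 1 ≤ i ∧ i ≤ k ∧ p = (x i, y i)}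
        {p : ℝ × ℝ | ∃ t : ℝ, 0 ≤ t ∧ t ≤ ℓ ∧ p = (a + t, b + m * t)})
    (hd1 : dn ≤ 1) (hdδ : dn ≤ δ / (4 * (1 + |m|)))
    (hB : (((Finset.Icc 1 k).filter (fun i =>
          (xb - δ < x i ∧ x i < xb + δ) ∧
          (yb - δ < y i ∧ y i < yb + δ))).card : ℝ) / (k : ℝ) < (1 + pδ) / 2) :
    (k : ℝ) * ((1 - pδ) / 2 * (δ / (2 * (1 + |m|))) ^ 2) ≤
        ∑ i ∈ Finset.Icc 1 k, (x i - xb) ^ 2 ∧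
    |(∑ i ∈ Finset.Icc 1 k, (y i - yb) * (x i - xb)) -
        m * ∑ i ∈ Finset.Icc 1 k, (x i - xb) ^ 2|
      ≤ (2 * (1 + |m|) * (ℓ + 2)) * dn * k := by
  have hm0 : (0:ℝ) ≤ |m| := abs_nonneg m
  set M := 1 + |m| with hM
  have hM1 : (1:ℝ) ≤ M := by rw [hM]; linarith
  have hM0 : (0:ℝ) < M := by linarith
  set K := (k : ℝ) with hK
  have hK1 : (1:ℝ) ≤ K := by rw [hK]; exact_mod_cast hk1
  have hK0 : (0:ℝ) < K := by linarith
  have hKne : K ≠ 0 := ne_of_gt hK0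
  have hcard : ((Finset.Icc 1 k).card : ℝ) = K := by
    rw [Nat.card_Icc, hK]
    norm_cast
  have hd0 : (0:ℝ) ≤ dn := hdn ▸ Metric.hausdorffDist_nonneg
  clear_value K M
  set T : Set (ℝ × ℝ) := {p : ℝ × ℝ | ∃ t : ℝ, 0 ≤ t ∧ t ≤ ℓ ∧ p = (a + t, b + m * t)} with hT
  have hTim : T = (fun t : ℝ => (a + t, b + m * t)) '' Set.Icc 0 ℓ := by
    ext p
    constructor
    · rintro ⟨t, h1, h2, rfl⟩; exact ⟨t, ⟨h1, h2⟩, rfl⟩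
    · rintro ⟨t, ⟨h1, h2⟩, rfl⟩; exact ⟨t, h1, h2, rfl⟩
  have hTc : IsCompact T := by
    rw [hTim]
    exact isCompact_Icc.image (by fun_prop)
  have hTne : T.Nonempty := ⟨(a + 0, b + m * 0), 0, le_refl _, hℓ.le, rfl⟩
  set S : Set (ℝ × ℝ) := {p : ℝ × ℝ | ∃ i : ℕ, 1 ≤ i ∧ i ≤ k ∧ p = (x i, y i)} with hS
  have hSim : S = (fun i : ℕ => (x i, y i)) '' Set.Icc 1 k := by
    ext p
    constructor
    · rintro ⟨i, h1, h2, rfl⟩; exact ⟨i, ⟨h1, h2⟩, rfl⟩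
    · rintro ⟨i, ⟨h1, h2⟩, rfl⟩; exact ⟨i, h1, h2, rfl⟩
  have hSne : S.Nonempty := ⟨(x 1, y 1), 1, le_refl _, hk1, rfl⟩
  have hSb : Bornology.IsBounded S := by
    rw [hSim]; exact ((Set.finite_Icc 1 k).image _).isBounded
  have hne_top : EMetric.hausdorffEdist S T ≠ ⊤ :=
    Metric.hausdorffEdist_ne_top_of_nonempty_of_bounded hSne hTne hSb hTc.isBounded
  have hmemS : ∀ i, 1 ≤ i → i ≤ k → (x i, y i) ∈ S := fun i h1 h2 => ⟨i, h1, h2, rfl⟩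
  clear_value S T
  have hpt : ∀ i ∈ Finset.Icc 1 k,
      |y i - b - m * (x i - a)| ≤ M * dn ∧ a - dn ≤ x i ∧ x i ≤ a + ℓ + dn := by
    intro i hi
    rw [Finset.mem_Icc] at hi
    have h1 : Metric.infDist (x i, y i) T ≤ dn := by
      rw [hdn]; exact Metric.infDist_le_hausdorffDist_of_mem (hmemS i hi.1 hi.2) hne_top
    obtain ⟨q, hqT, hq⟩ := hTc.exists_infDist_eq_dist hTne (x i, y i)
    rw [hT] at hqT
    obtain ⟨t, ht0, htℓ, rfl⟩ := hqT
    rw [hq] at h1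
    simp only [Prod.dist_eq, Real.dist_eq, max_le_iff] at h1
    obtain ⟨hx1, hy1⟩ := h1
    have hx2 := abs_le.mp hx1
    refine ⟨?_, by linarith [hx2.1], by linarith [hx2.2]⟩
    have e1 : y i - b - m * (x i - a) = (y i - (b + m * t)) - m * (x i - (a + t)) := by ring
    rw [e1]
    have h2 : |m * (x i - (a + t))| ≤ |m| * dn := by
      rw [abs_mul]; exact mul_le_mul_of_nonneg_left hx1 hm0
    calc |(y i - (b + m * t)) - m * (x i - (a + t))|
        ≤ |y i - (b + m * t)| + |m * (x i - (a + t))| := abs_sub _ _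
      _ ≤ dn + |m| * dn := add_le_add hy1 h2
      _ = M * dn := by linear_combination dn * hM.symm
  have hxlo : a - dn ≤ xb := by
    rw [hxb, le_div_iff₀ hK0]
    calc (a - dn) * K = (Finset.Icc 1 k).card • (a - dn) := by rw [nsmul_eq_mul, hcard]; ring
      _ ≤ ∑ i ∈ Finset.Icc 1 k, x i :=
        Finset.card_nsmul_le_sum _ _ _ (fun i hi => (hpt i hi).2.1)
  have hxhi : xb ≤ a + ℓ + dn := by
    rw [hxb, div_le_iff₀ hK0]
    calc ∑ i ∈ Finset.Icc 1 k, x i ≤ (Finset.Icc 1 k).card • (a + ℓ + dn) :=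
        Finset.sum_le_card_nsmul _ _ _ (fun i hi => (hpt i hi).2.2)
      _ = (a + ℓ + dn) * K := by rw [nsmul_eq_mul, hcard]; ring
  have hxr : ∀ i ∈ Finset.Icc 1 k, |x i - xb| ≤ ℓ + 2 * dn := by
    intro i hi
    have h := hpt i hi
    rw [abs_le]
    constructor <;> [linarith [h.2.1]; linarith [h.2.2]]
  set Se := ∑ i ∈ Finset.Icc 1 k, (y i - b - m * (x i - a)) with hSedef
  have hSeabs : |Se / K| ≤ M * dn := by
    rw [abs_div, abs_of_pos hK0, div_le_iff₀ hK0, hSedef]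
    calc |∑ i ∈ Finset.Icc 1 k, (y i - b - m * (x i - a))|
        ≤ ∑ i ∈ Finset.Icc 1 k, |y i - b - m * (x i - a)| :=
        Finset.abs_sum_le_sum_abs _ _
      _ ≤ (Finset.Icc 1 k).card • (M * dn) :=
        Finset.sum_le_card_nsmul _ _ _ (fun i hi => (hpt i hi).1)
      _ = M * dn * K := by rw [nsmul_eq_mul, hcard]; ring
  have hSe : Se = (∑ i ∈ Finset.Icc 1 k, y i) - K * b
      - m * ((∑ i ∈ Finset.Icc 1 k, x i) - K * a) := by
    rw [hSedef, Finset.sum_sub_distrib, Finset.sum_sub_distrib, Finset.sum_const,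
      nsmul_eq_mul, hcard, ← Finset.mul_sum, Finset.sum_sub_distrib, Finset.sum_const,
      nsmul_eq_mul, hcard]
  clear_value Se
  have hyb2 : yb = b + m * (xb - a) + Se / K := by
    have hSy : (∑ i ∈ Finset.Icc 1 k, y i)
        = K * b + m * ((∑ i ∈ Finset.Icc 1 k, x i) - K * a) + Se := by linarith [hSe]
    rw [hyb, hxb, hSy]
    field_simp
  have hid : ∀ i ∈ Finset.Icc 1 k,
      y i - yb = m * (x i - xb) + ((y i - b - m * (x i - a)) - Se / K) := by
    intro i _
    rw [hyb2]; ring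
  have hEps : ∀ i ∈ Finset.Icc 1 k, |(y i - b - m * (x i - a)) - Se / K| ≤ 2 * M * dn := by
    intro i hi
    calc |(y i - b - m * (x i - a)) - Se / K|
        ≤ |y i - b - m * (x i - a)| + |Se / K| := abs_sub _ _
      _ ≤ M * dn + M * dn := add_le_add (hpt i hi).1 hSeabs
      _ = 2 * M * dn := by ring
  have hNQ : (∑ i ∈ Finset.Icc 1 k, (y i - yb) * (x i - xb)) -
      m * ∑ i ∈ Finset.Icc 1 k, (x i - xb) ^ 2
      = ∑ i ∈ Finset.Icc 1 k, ((y i - b - m * (x i - a)) - Se / K) * (x i - xb) := by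
    rw [Finset.mul_sum, ← Finset.sum_sub_distrib]
    refine Finset.sum_congr rfl fun i hi => ?_
    linear_combination (x i - xb) * hid i hi
  have hNbound : |(∑ i ∈ Finset.Icc 1 k, (y i - yb) * (x i - xb)) -
      m * ∑ i ∈ Finset.Icc 1 k, (x i - xb) ^ 2|
      ≤ (2 * M * (ℓ + 2)) * dn * K := by
    rw [hNQ]
    calc |∑ i ∈ Finset.Icc 1 k, ((y i - b - m * (x i - a)) - Se / K) * (x i - xb)|
        ≤ ∑ i ∈ Finset.Icc 1 k, |((y i - b - m * (x i - a)) - Se / K) * (x i - xb)| :=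
          Finset.abs_sum_le_sum_abs _ _
      _ ≤ (Finset.Icc 1 k).card • ((2 * M * dn) * (ℓ + 2 * dn)) := by
          refine Finset.sum_le_card_nsmul _ _ _ (fun i hi => ?_)
          rw [abs_mul]
          exact mul_le_mul (hEps i hi) (hxr i hi) (abs_nonneg _) (by positivity)
      _ = (2 * M * dn) * (ℓ + 2 * dn) * K := by rw [nsmul_eq_mul, hcard]; ring
      _ ≤ (2 * M * (ℓ + 2)) * dn * K := by
          nlinarith [mul_nonneg (mul_nonneg (mul_nonneg
            (by linarith : (0:ℝ) ≤ 2 * M) hd0) (by linarith : (0:ℝ) ≤ K))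
            (by linarith : (0:ℝ) ≤ 1 - dn)]
  set P : ℕ → Prop := fun i => (xb - δ < x i ∧ x i < xb + δ) ∧ (yb - δ < y i ∧ y i < yb + δ)
    with hP
  set An := (Finset.Icc 1 k).filter (fun i => ¬ P i) with hAn
  have hcards : ((Finset.Icc 1 k).filter P).card + An.card = k := by
    rw [hAn, Finset.card_filter_add_card_filter_not, Nat.card_Icc]
    omega
  have hAcard : (1 - pδ) / 2 * K ≤ (An.card : ℝ) := by
    have h1 : (((Finset.Icc 1 k).filter P).card : ℝ) < (1 + pδ) / 2 * K := by
      rw [div_lt_iff₀ hK0] at hB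
      convert hB using 1
    have h2 : (((Finset.Icc 1 k).filter P).card : ℝ) + (An.card : ℝ) = K := by
      rw [hK]; exact_mod_cast congrArg (Nat.cast : ℕ → ℝ) hcards
    linarith
  have h2Md : 2 * M * dn ≤ δ / 2 := by
    have h4 : 2 * M * (δ / (4 * M)) = δ / 2 := by field_simp; ring
    nlinarith [mul_le_mul_of_nonneg_left hdδ (by linarith : (0:ℝ) ≤ 2 * M)]
  have hAr : ∀ i ∈ An, δ / (2 * M) ≤ |x i - xb| := by
    intro i hi
    rw [hAn, Finset.mem_filter] at hi
    obtain ⟨hiI, hnP⟩ := hi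
    rw [hP] at hnP
    have hidy := hid i hiI
    have hEi := hEps i hiI
    clear hB hNbound hNQ hid hEps hpt hxr hSe hSeabs hyb2 hxlo hxhi hcards hAcard hAn An hP P
    by_cases hx : δ ≤ |x i - xb|
    · refine le_trans ?_ hx
      rw [div_le_iff₀ (by linarith : (0:ℝ) < 2 * M)]
      linarith [mul_nonneg hδ.le (by linarith : (0:ℝ) ≤ 2 * M - 1)]
    · push_neg at hx
      rw [abs_lt] at hx
      have hy : ¬ (yb - δ < y i ∧ y i < yb + δ) := by
        intro h
        exact hnP ⟨⟨by linarith [hx.1], by linarith [hx.2]⟩, h⟩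
      have hyabs : δ ≤ |y i - yb| := by
        rcases not_and_or.mp hy with h | h
        · push_neg at h
          exact le_abs.mpr (Or.inr (by linarith))
        · push_neg at h
          exact le_abs.mpr (Or.inl (by linarith))
      have habs : |y i - yb| ≤ |m| * |x i - xb| + 2 * M * dn := by
        rw [hidy]
        calc |m * (x i - xb) + ((y i - b - m * (x i - a)) - Se / K)|
            ≤ |m * (x i - xb)| + |(y i - b - m * (x i - a)) - Se / K| := abs_add_le _ _
          _ ≤ |m| * |x i - xb| + 2 * M * dn := by
              rw [abs_mul]; exact add_le_add_right hEi _
      have hMr : |x i - xb| * M = |x i - xb| * (1 + |m|) := by rw [hM]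
      rw [div_le_iff₀ (by linarith : (0:ℝ) < 2 * M)]
      linarith [hyabs, habs, h2Md, hMr, abs_nonneg (x i - xb)]
  have hQsub : ∑ i ∈ An, (x i - xb) ^ 2 ≤ ∑ i ∈ Finset.Icc 1 k, (x i - xb) ^ 2 :=
    Finset.sum_le_sum_of_subset_of_nonneg (Finset.filter_subset _ _) (fun i _ _ => sq_nonneg _)
  have hQA : (An.card : ℝ) * (δ / (2 * M)) ^ 2 ≤ ∑ i ∈ An, (x i - xb) ^ 2 := by
    calc (An.card : ℝ) * (δ / (2 * M)) ^ 2 = An.card • ((δ / (2 * M)) ^ 2) := by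
          rw [nsmul_eq_mul]
      _ ≤ ∑ i ∈ An, (x i - xb) ^ 2 := by
          refine Finset.card_nsmul_le_sum _ _ _ (fun i hi => ?_)
          calc (δ / (2 * M)) ^ 2 ≤ |x i - xb| ^ 2 :=
              pow_le_pow_left₀ (by positivity) (hAr i hi) 2
            _ = (x i - xb) ^ 2 := sq_abs _
  refine ⟨?_, hNbound⟩
  have hmul := mul_le_mul_of_nonneg_right hAcard (sq_nonneg (δ / (2 * M)))
  set cA := (An.card : ℝ) with hcA
  set QA := ∑ i ∈ An, (x i - xb) ^ 2 with hQAs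
  set Q := ∑ i ∈ Finset.Icc 1 k, (x i - xb) ^ 2 with hQs
  clear_value cA QA Q
  clear hcA hQAs hQs hB hNbound hNQ hid hEps hpt hxr hSe hSeabs hyb2 hxlo hxhi hcards hAr hAn An hP P
  linarith [hmul, hQA, hQsub, hAcard]

/-- Suppose the finite point sets
`F n = {(x n i, y n i) : 1 ≤ i ≤ k n}` (with `k n → ∞` distinct points) converge in the
Hausdorff metric to a bounded closed line segment of positive length and finite slope
`m`, and that for some `δ > 0` the proportion of points of `F n` in the box
`(x̄ₙ - δ, x̄ₙ + δ) × (ȳₙ - δ, ȳₙ + δ)` around the coordinate means converges to some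
`p < 1`. Then the least squares slope through `F n` is well defined for all large `n`
and converges to `m`. -/
theorem lsSlope_tendsto_of_hausdorff_tendsto
    (k : ℕ → ℕ) (x y : ℕ → ℕ → ℝ) (xb yb : ℕ → ℝ)
    (m a b ℓ : ℝ) (hℓ : 0 < ℓ)
    (hk : Tendsto k atTop atTop)
    (hdistinct : ∀ n, Set.InjOn (fun i => (x n i, y n i)) (Set.Icc 1 (k n)))
    (hxb : ∀ n, xb n = (∑ i ∈ Finset.Icc 1 (k n), x n i) / (k n : ℝ))
    (hyb : ∀ n, yb n = (∑ i ∈ Finset.Icc 1 (k n), y n i) / (k n : ℝ))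
    (hconv : Tendsto (fun n => Metric.hausdorffDist
        {p : ℝ × ℝ | ∃ i : ℕ, 1 ≤ i ∧ i ≤ k n ∧ p = (x n i, y n i)}
        {p : ℝ × ℝ | ∃ t : ℝ, 0 ≤ t ∧ t ≤ ℓ ∧ p = (a + t, b + m * t)})
      atTop (nhds 0))
    (δ : ℝ) (hδ : 0 < δ) (pδ : ℝ) (hpδ0 : 0 ≤ pδ) (hpδ1 : pδ < 1)
    (hbox : Tendsto (fun n =>
        (((Finset.Icc 1 (k n)).filter (fun i =>
          (xb n - δ < x n i ∧ x n i < xb n + δ) ∧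
          (yb n - δ < y n i ∧ y n i < yb n + δ))).card : ℝ) / (k n : ℝ))
      atTop (nhds pδ)) :
    (∀ᶠ n in atTop, ∑ i ∈ Finset.Icc 1 (k n), (x n i - xb n) ^ 2 ≠ 0) ∧
    Tendsto (fun n =>
        (∑ i ∈ Finset.Icc 1 (k n), (y n i - yb n) * (x n i - xb n)) /
        (∑ i ∈ Finset.Icc 1 (k n), (x n i - xb n) ^ 2))
      atTop (nhds m) := by
  have hm0 : (0:ℝ) ≤ |m| := abs_nonneg m
  set q0 : ℝ := (1 - pδ) / 2 * (δ / (2 * (1 + |m|))) ^ 2 with hq0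
  have hq00 : 0 < q0 := by
    apply mul_pos (by linarith)
    positivity
  set C1 : ℝ := 2 * (1 + |m|) * (ℓ + 2) with hC1
  have hC10 : 0 < C1 := by
    apply mul_pos (by positivity)
    linarith
  have h1 : ∀ᶠ n in atTop, 1 ≤ k n := hk.eventually_ge_atTop 1
  have h2a : ∀ᶠ n in atTop, Metric.hausdorffDist
      {p : ℝ × ℝ | ∃ i : ℕ, 1 ≤ i ∧ i ≤ k n ∧ p = (x n i, y n i)}
      {p : ℝ × ℝ | ∃ t : ℝ, 0 ≤ t ∧ t ≤ ℓ ∧ p = (a + t, b + m * t)} ≤ 1 :=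
    (hconv.eventually_lt_const one_pos).mono fun n h => h.le
  have h2b : ∀ᶠ n in atTop, Metric.hausdorffDist
      {p : ℝ × ℝ | ∃ i : ℕ, 1 ≤ i ∧ i ≤ k n ∧ p = (x n i, y n i)}
      {p : ℝ × ℝ | ∃ t : ℝ, 0 ≤ t ∧ t ≤ ℓ ∧ p = (a + t, b + m * t)} ≤ δ / (4 * (1 + |m|)) :=
    (hconv.eventually_lt_const (by positivity)).mono fun n h => h.le
  have h3 : ∀ᶠ n in atTop, (((Finset.Icc 1 (k n)).filter (fun i =>
          (xb n - δ < x n i ∧ x n i < xb n + δ) ∧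
          (yb n - δ < y n i ∧ y n i < yb n + δ))).card : ℝ) / (k n : ℝ) < (1 + pδ) / 2 :=
    hbox.eventually_lt_const (by linarith)
  have hkey : ∀ᶠ n in atTop,
      (k n : ℝ) * q0 ≤ ∑ i ∈ Finset.Icc 1 (k n), (x n i - xb n) ^ 2 ∧
      |(∑ i ∈ Finset.Icc 1 (k n), (y n i - yb n) * (x n i - xb n)) -
          m * ∑ i ∈ Finset.Icc 1 (k n), (x n i - xb n) ^ 2|
        ≤ C1 * Metric.hausdorffDist
            {p : ℝ × ℝ | ∃ i : ℕ, 1 ≤ i ∧ i ≤ k n ∧ p = (x n i, y n i)}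
            {p : ℝ × ℝ | ∃ t : ℝ, 0 ≤ t ∧ t ≤ ℓ ∧ p = (a + t, b + m * t)} * (k n : ℝ) := by
    filter_upwards [h1, h2a, h2b, h3] with n hk1 hda hdb hb
    exact lsSlope_aux (k n) (x n) (y n) m a b ℓ δ pδ (xb n) (yb n) hℓ hδ hpδ1 hk1
      (hxb n) (hyb n) _ rfl hda hdb hb
  have hkpos : ∀ᶠ n in atTop, (1:ℝ) ≤ (k n : ℝ) := by
    filter_upwards [h1] with n hn
    exact_mod_cast hn
  constructor
  · filter_upwards [hkey, hkpos] with n hn hK1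
    have : 0 < ∑ i ∈ Finset.Icc 1 (k n), (x n i - xb n) ^ 2 :=
      lt_of_lt_of_le (by nlinarith) hn.1
    exact this.ne'
  · rw [tendsto_iff_dist_tendsto_zero]
    simp only [Real.dist_eq]
    apply squeeze_zero' (g := fun n => C1 / q0 * Metric.hausdorffDist
        {p : ℝ × ℝ | ∃ i : ℕ, 1 ≤ i ∧ i ≤ k n ∧ p = (x n i, y n i)}
        {p : ℝ × ℝ | ∃ t : ℝ, 0 ≤ t ∧ t ≤ ℓ ∧ p = (a + t, b + m * t)})
      (Filter.Eventually.of_forall fun n => abs_nonneg _) ?_ ?_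
    · filter_upwards [hkey, hkpos] with n hn hK1
      obtain ⟨hQ, hN⟩ := hn
      set D := Metric.hausdorffDist
        {p : ℝ × ℝ | ∃ i : ℕ, 1 ≤ i ∧ i ≤ k n ∧ p = (x n i, y n i)}
        {p : ℝ × ℝ | ∃ t : ℝ, 0 ≤ t ∧ t ≤ ℓ ∧ p = (a + t, b + m * t)} with hD
      have hd0 : 0 ≤ D := Metric.hausdorffDist_nonneg
      set Q := ∑ i ∈ Finset.Icc 1 (k n), (x n i - xb n) ^ 2 with hQdef
      set N := ∑ i ∈ Finset.Icc 1 (k n), (y n i - yb n) * (x n i - xb n) with hNdef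
      set K := (k n : ℝ) with hKdef
      clear_value D Q N K
      have hQpos : 0 < Q := lt_of_lt_of_le (by nlinarith) hQ
      have heq : N / Q - m = (N - m * Q) / Q := by field_simp
      rw [heq, abs_div, abs_of_pos hQpos, div_le_iff₀ hQpos]
      have hstep : (C1 / q0 * D) * (K * q0) ≤ (C1 / q0 * D) * Q :=
        mul_le_mul_of_nonneg_left hQ
          (mul_nonneg (div_nonneg hC10.le hq00.le) hd0)
      calc |N - m * Q| ≤ C1 * D * K := hN
        _ = (C1 / q0 * D) * (K * q0) := by field_simp
        _ ≤ (C1 / q0 * D) * Q := hstep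
        _ = C1 / q0 * D * Q := by ring
    · have := hconv.const_mul (C1 / q0)
      simpa using this
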